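/- Define E(x,y,z) = f₁(x) - ⟨x,y⟩ + f₂*(y) + ((σ₁-γ)/2)‖x - z‖². For the exact refined inertial DCA sequence (yᵏ ∈ ∂f₂(xᵏ), yᵏ + γ(xᵏ - xᵏ⁻¹) ∈ ∂f₁(xᵏ⁺¹)) with f₁ σ₁-convex, f₂ σ₂-convex, σ₁+σ₂ > 0, γ ∈ [0,(σ₁+σ₂)/2), one has for every k ≥ 1: E(xᵏ⁺¹, yᵏ, xᵏ) ≤ E(xᵏ, yᵏ⁻¹, xᵏ⁻¹) - ((σ₁+σ₂-2γ)/2)‖xᵏ - xᵏ⁻¹‖². -/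

import Mathlib

open RealInnerProductSpace

def subdiff {n : ℕ} (f : EuclideanSpace ℝ (Fin n) → ℝ) (x : EuclideanSpace ℝ (Fin n)) :
    Set (EuclideanSpace ℝ (Fin n)) :=
  {y | ∀ z, f x + ⟪y, z - x⟫ ≤ f z}

def StrongConvex {n : ℕ} (σ : ℝ) (f : EuclideanSpace ℝ (Fin n) → ℝ) : Prop :=
  ConvexOn ℝ Set.univ (fun x => f x - σ / 2 * ‖x‖ ^ 2)

noncomputable def conj {n : ℕ} (f : EuclideanSpace ℝ (Fin n) → ℝ)
    (y : EuclideanSpace ℝ (Fin n)) : ℝ :=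
  ⨆ z, (⟪y, z⟫ - f z)

/-- The auxiliary (Lyapunov) function E(x,y,z). -/
noncomputable def Efun {n : ℕ} (f₁ f₂ : EuclideanSpace ℝ (Fin n) → ℝ) (σ₁ γ : ℝ)
    (x y z : EuclideanSpace ℝ (Fin n)) : ℝ :=
  f₁ x - ⟪x, y⟫ + conj f₂ y + (σ₁ - γ) / 2 * ‖x - z‖ ^ 2

/-- The conjugate value at a subgradient: if `y ∈ ∂f(x)` then `f*(y) = ⟪y,x⟫ - f x`. -/
lemma conj_eq_of_subdiff {n : ℕ} {f : EuclideanSpace ℝ (Fin n) → ℝ}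
    {x y : EuclideanSpace ℝ (Fin n)} (hy : ∀ z, f x + ⟪y, z - x⟫ ≤ f z) :
    conj f y = ⟪y, x⟫ - f x := by
  have hub : ∀ z, ⟪y, z⟫ - f z ≤ ⟪y, x⟫ - f x := by
    intro z
    have := hy z
    rw [inner_sub_right] at this
    linarith
  refine le_antisymm (ciSup_le hub) ?_
  exact le_ciSup ⟨⟪y, x⟫ - f x, by rintro _ ⟨z, rfl⟩; exact hub z⟩ x

/-- Strong subgradient inequality: if `f` is `σ`-strongly convex and `v ∈ ∂f(x)`, then
`f x + ⟪v, z - x⟫ + σ/2 ‖z - x‖² ≤ f z`. -/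
lemma strong_subgrad {n : ℕ} {σ : ℝ} {f : EuclideanSpace ℝ (Fin n) → ℝ}
    {x v : EuclideanSpace ℝ (Fin n)} (hσ : 0 ≤ σ)
    (hf : StrongConvex σ f)
    (hv : ∀ z, f x + ⟪v, z - x⟫ ≤ f z) (z : EuclideanSpace ℝ (Fin n)) :
    f x + ⟪v, z - x⟫ + σ / 2 * ‖z - x‖ ^ 2 ≤ f z := by
  have key : ∀ t : ℝ, 0 < t → t < 1 →
      f x + ⟪v, z - x⟫ + σ / 2 * ‖z - x‖ ^ 2 ≤ f z + σ / 2 * t * ‖z - x‖ ^ 2 := by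
    intro t ht0 ht1
    have hcv := hf.2 (Set.mem_univ x) (Set.mem_univ z) (by linarith : (0:ℝ) ≤ 1 - t)
      (le_of_lt ht0) (by ring)
    simp only [smul_eq_mul] at hcv
    have hsub := hv ((1 - t) • x + t • z)
    have harg : ((1 - t) • x + t • z) - x = t • (z - x) := by
      rw [smul_sub, sub_smul, one_smul]; abel
    rw [harg, real_inner_smul_right] at hsub
    have hnorm : ‖(1 - t) • x + t • z‖ ^ 2
        = (1 - t) * ‖x‖ ^ 2 + t * ‖z‖ ^ 2 - t * (1 - t) * ‖z - x‖ ^ 2 := by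
      have e : ∀ w : EuclideanSpace ℝ (Fin n), ‖w‖ ^ 2 = ⟪w, w⟫ := by
        intro w; rw [real_inner_self_eq_norm_sq]
      simp only [e, inner_add_left, inner_add_right, inner_sub_left, inner_sub_right,
        real_inner_smul_left, real_inner_smul_right, real_inner_comm x z]
      ring
    nlinarith [hcv, hsub, sq_nonneg ‖z - x‖]
  rcases eq_or_lt_of_le (mul_nonneg (by linarith : (0:ℝ) ≤ σ / 2) (sq_nonneg ‖z - x‖)) with h | h
  · have := key (1/2) (by norm_num) (by norm_num)
    nlinarith
  · refine le_of_forall_pos_le_add ?_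
    intro ε hε
    set C := σ / 2 * ‖z - x‖ ^ 2 with hC
    set t := min (1/2) (ε / (2 * C)) with htdef
    have hCpos : 0 < C := h
    have ht0 : 0 < t := lt_min (by norm_num) (div_pos hε (by linarith))
    have ht1 : t < 1 := lt_of_le_of_lt (min_le_left _ _) (by norm_num)
    have := key t ht0 ht1
    have htC : t * C ≤ ε := by
      have : t ≤ ε / (2 * C) := min_le_right _ _
      calc t * C ≤ (ε / (2 * C)) * C := by nlinarith
        _ = ε / 2 := by field_simp
        _ ≤ ε := by linarith
    nlinarith

/-- Proposition 4.1(i): descent of the auxiliary function E along the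
exact refined inertial DCA iteration. -/
theorem Efun_descent {n : ℕ}
    (f₁ f₂ : EuclideanSpace ℝ (Fin n) → ℝ) (σ₁ σ₂ γ : ℝ)
    (hσ₁ : 0 ≤ σ₁) (hσ₂ : 0 ≤ σ₂) (hpos : 0 < σ₁ + σ₂)
    (hγ : γ ∈ Set.Ico (0 : ℝ) ((σ₁ + σ₂) / 2))
    (hf₁ : StrongConvex σ₁ f₁) (hf₂ : StrongConvex σ₂ f₂)
    (xkm1 xk xkp1 ykm1 yk : EuclideanSpace ℝ (Fin n))
    (hykm1 : ykm1 ∈ subdiff f₂ xkm1) (hyk : yk ∈ subdiff f₂ xk)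
    (hstep : yk + γ • (xk - xkm1) ∈ subdiff f₁ xkp1) :
    Efun f₁ f₂ σ₁ γ xkp1 yk xk
      ≤ Efun f₁ f₂ σ₁ γ xk ykm1 xkm1 - (σ₁ + σ₂ - 2 * γ) / 2 * ‖xk - xkm1‖ ^ 2 := by
  have hc1 : conj f₂ yk = ⟪yk, xk⟫ - f₂ xk := conj_eq_of_subdiff hyk
  have hc2 : conj f₂ ykm1 = ⟪ykm1, xkm1⟫ - f₂ xkm1 := conj_eq_of_subdiff hykm1
  have hA := strong_subgrad hσ₁ hf₁ hstep xk
  have hB := strong_subgrad hσ₂ hf₂ hykm1 xk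
  have hγ0 : 0 ≤ γ := hγ.1
  unfold Efun
  rw [hc1, hc2]
  have e : ∀ w : EuclideanSpace ℝ (Fin n), ‖w‖ ^ 2 = ⟪w, w⟫ := by
    intro w; rw [real_inner_self_eq_norm_sq]
  have hsq : 0 ≤ γ * ‖(xk - xkp1) + (xk - xkm1)‖ ^ 2 :=
    mul_nonneg hγ0 (sq_nonneg _)
  simp only [e, inner_add_left, inner_add_right, inner_sub_left, inner_sub_right,
    real_inner_smul_left] at hA hB hsq ⊢
  have c1 : ⟪xk, xkp1⟫ = ⟪xkp1, xk⟫ := real_inner_comm _ _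
  have c2 : ⟪xk, xkm1⟫ = ⟪xkm1, xk⟫ := real_inner_comm _ _
  have c3 : ⟪xkp1, xkm1⟫ = ⟪xkm1, xkp1⟫ := real_inner_comm _ _
  have c4 : ⟪xkp1, yk⟫ = ⟪yk, xkp1⟫ := real_inner_comm _ _
  have c5 : ⟪xk, ykm1⟫ = ⟪ykm1, xk⟫ := real_inner_comm _ _
  nlinarith [hA, hB, hsq]
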